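/- Let Q be a quaternion division algebra over F and P(x) ∈ Q[x] a monic polynomial of degree n. Then P(x) has at most n/2 distinct conjugacy classes of spherical roots. -/

import Mathlib

open Polynomial

/-- `q` is a spherical root of `P`: `q` is non-central (not in `F`) and every conjugate
of `q` is a right root of `P`. -/
def IsSphericalRoot (F : Type*) {Q : Type*} [Field F] [DivisionRing Q] [Algebra F Q]
    (P : Q[X]) (q : Q) : Prop :=
  (¬∃ r : F, q = algebraMap F Q r) ∧ ∀ g : Q, g ≠ 0 → P.eval (g * q * g⁻¹) = 0

section Aux

variable {F Q : Type*} [Field F] [DivisionRing Q] [Algebra F Q]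

lemma C_alg_comm (a : F) (r : Q[X]) :
    C (algebraMap F Q a) * r = r * C (algebraMap F Q a) := by
  ext n
  simp [coeff_C_mul, coeff_mul_C, Algebra.commutes]

lemma map_alg_comm (f : F[X]) (r : Q[X]) :
    f.map (algebraMap F Q) * r = r * f.map (algebraMap F Q) := by
  induction f using Polynomial.induction_on' with
  | add p q hp hq => rw [Polynomial.map_add, add_mul, mul_add, hp, hq]
  | monomial n a =>
      rw [Polynomial.map_monomial, ← C_mul_X_pow_eq_monomial, mul_assoc,
        ((commute_X_pow r n)).eq, ← mul_assoc, C_alg_comm, mul_assoc]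

lemma conj_pow' {g : Q} (hg : g ≠ 0) (q : Q) (n : ℕ) :
    (g * q * g⁻¹) ^ n = g * q ^ n * g⁻¹ := by
  induction n with
  | zero => simp [mul_inv_cancel₀ hg]
  | succ n ih => rw [pow_succ, ih, pow_succ]; simp [mul_assoc, inv_mul_cancel_left₀ hg]

lemma eval_map_conj (f : F[X]) {g : Q} (hg : g ≠ 0) (q : Q) :
    (f.map (algebraMap F Q)).eval (g * q * g⁻¹)
      = g * (f.map (algebraMap F Q)).eval q * g⁻¹ := by
  induction f using Polynomial.induction_on' with
  | add p r hp hr => rw [Polynomial.map_add, eval_add, hp, hr, eval_add, mul_add, add_mul]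
  | monomial n a =>
      rw [Polynomial.map_monomial, eval_monomial, eval_monomial, conj_pow' hg q n,
        ← mul_assoc, ← mul_assoc, Algebra.commutes a g, mul_assoc, mul_assoc, mul_assoc, mul_assoc]

lemma eval_mul_map (S : Q[X]) (c : F[X]) (x : Q) :
    (S * c.map (algebraMap F Q)).eval x = S.eval x * (c.map (algebraMap F Q)).eval x := by
  have h : ∀ k, Commute ((RingHom.id Q) ((c.map (algebraMap F Q)).coeff k)) x := by
    intro k
    simp only [RingHom.id_apply, coeff_map]
    exact Algebra.commutes (c.coeff k) x
  exact eval₂_mul_noncomm (RingHom.id Q) x h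

lemma exists_noncomm (hcent : ∀ z : Q, (∀ w : Q, z * w = w * z) → ∃ r : F, z = algebraMap F Q r)
    {q : Q} (hq : ¬∃ r : F, q = algebraMap F Q r) :
    ∃ w : Q, w ≠ 0 ∧ w * q * w⁻¹ ≠ q := by
  by_contra h
  push_neg at h
  refine hq (hcent q fun w => ?_)
  rcases eq_or_ne w 0 with rfl | hw
  · simp
  · have := h w hw
    have h2 : w * q * w⁻¹ * w = q * w := by rw [this]
    rw [mul_assoc, inv_mul_cancel₀ hw, mul_one] at h2
    exact h2.symm

lemma eval_map_quad {p : F[X]} (hmo : p.Monic) (h2 : p.natDegree = 2) (y : Q) :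
    (p.map (algebraMap F Q)).eval y
      = y ^ 2 + algebraMap F Q (p.coeff 1) * y + algebraMap F Q (p.coeff 0) := by
  have hdeg : (p.map (algebraMap F Q)).natDegree = 2 := by
    rw [hmo.natDegree_map]; exact h2
  have hc2 : p.coeff 2 = 1 := by
    have := hmo.leadingCoeff
    rwa [leadingCoeff, h2] at this
  rw [eval_eq_sum_range, hdeg]
  simp only [Finset.sum_range_succ, Finset.sum_range_zero, coeff_map, hc2, map_one, one_mul,
    pow_zero, pow_one, mul_one, zero_add]
  noncomm_ring

lemma conj_conj {g h : Q} (x : Q) :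
    g * (h * x * h⁻¹) * g⁻¹ = (g * h) * x * (g * h)⁻¹ := by
  rw [mul_inv_rev]
  simp [mul_assoc]

lemma conj_flip {g : Q} (hg : g ≠ 0) {x y : Q} (h : y = g * x * g⁻¹) :
    x = g⁻¹ * y * (g⁻¹)⁻¹ := by
  subst h
  rw [inv_inv]
  simp [mul_assoc, inv_mul_cancel_left₀ hg, inv_mul_cancel₀ hg]

lemma conj_of_root (hcent : ∀ z : Q, (∀ w : Q, z * w = w * z) → ∃ r : F, z = algebraMap F Q r)
    {q : Q} (hq : ¬∃ s : F, q = algebraMap F Q s)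
    {p : F[X]} (hmo : p.Monic) (h2 : p.natDegree = 2)
    (hq0 : (p.map (algebraMap F Q)).eval q = 0) {r : Q}
    (hr0 : (p.map (algebraMap F Q)).eval r = 0) :
    ∃ g : Q, g ≠ 0 ∧ r = g * q * g⁻¹ := by
  set b := algebraMap F Q (p.coeff 1) with hb
  set c0 := algebraMap F Q (p.coeff 0) with hc0
  have hq' : q ^ 2 + b * q + c0 = 0 := by rw [← eval_map_quad hmo h2]; exact hq0
  have key : ∀ s : Q, (p.map (algebraMap F Q)).eval s = 0 → s ≠ q →
      s = (s - q) * (-b - q) * (s - q)⁻¹ := by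
    intro s hs hne
    have hd : s - q ≠ 0 := sub_ne_zero.2 hne
    have hs' : s ^ 2 + b * s + c0 = 0 := by rw [← eval_map_quad hmo h2]; exact hs
    have e : s * (s - q) - (s - q) * (-b - q)
        = (s ^ 2 + s * b + c0) - (q ^ 2 + q * b + c0) := by noncomm_ring
    rw [← Algebra.commutes (p.coeff 1) s, ← Algebra.commutes (p.coeff 1) q, ← hb,
      hs', hq', sub_zero] at e
    have h3 : s * (s - q) = (s - q) * (-b - q) := sub_eq_zero.1 e
    calc s = s * (s - q) * (s - q)⁻¹ := by rw [mul_assoc, mul_inv_cancel₀ hd, mul_one]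
    _ = (s - q) * (-b - q) * (s - q)⁻¹ := by rw [h3]
  obtain ⟨w, hw0, hwq⟩ := exists_noncomm hcent hq
  have hs₀ : (p.map (algebraMap F Q)).eval (w * q * w⁻¹) = 0 := by
    rw [eval_map_conj p hw0 q, hq0, mul_zero, zero_mul]
  have hd' : w * q * w⁻¹ - q ≠ 0 := sub_ne_zero.2 hwq
  have ht : -b - q = (w * q * w⁻¹ - q)⁻¹ * (w * q * w⁻¹) * ((w * q * w⁻¹ - q)⁻¹)⁻¹ :=
    conj_flip hd' (key _ hs₀ hwq)
  rw [conj_conj] at ht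
  rcases eq_or_ne r q with rfl | hrq
  · exact ⟨1, one_ne_zero, by simp⟩
  · refine ⟨(r - q) * ((w * q * w⁻¹ - q)⁻¹ * w), ?_, ?_⟩
    · exact mul_ne_zero (sub_ne_zero.2 hrq) (mul_ne_zero (inv_ne_zero hd') hw0)
    · rw [← conj_conj, ← ht]
      exact key r hr0 hrq

lemma spherical_dvd (hcent : ∀ z : Q, (∀ w : Q, z * w = w * z) → ∃ r : F, z = algebraMap F Q r)
    {P : Q[X]} {q : Q} (hq : IsSphericalRoot F P q)
    {p : F[X]} (hmo : p.Monic) (h2 : p.natDegree = 2)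
    (hq0 : (p.map (algebraMap F Q)).eval q = 0) :
    p.map (algebraMap F Q) ∣ P := by
  set c : Q[X] := p.map (algebraMap F Q) with hc
  have hcmo : c.Monic := hmo.map _
  have hevalc : ∀ g : Q, g ≠ 0 → c.eval (g * q * g⁻¹) = 0 := by
    intro g hg
    rw [hc, eval_map_conj p hg q, ← hc, hq0, mul_zero, zero_mul]
  have hmod : ∀ g : Q, g ≠ 0 → (P %ₘ c).eval (g * q * g⁻¹) = 0 := by
    intro g hg
    have h1 := modByMonic_add_div P c
    have h2' : (c * (P /ₘ c)).eval (g * q * g⁻¹) = 0 := by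
      rw [hc, map_alg_comm p (P /ₘ c), eval_mul_map, ← hc, hevalc g hg, mul_zero]
    have h3 := congrArg (Polynomial.eval (g * q * g⁻¹)) h1
    rw [eval_add, h2', add_zero] at h3
    rw [h3]
    exact hq.2 g hg
  have hne1 : c ≠ 1 := by
    intro h
    have : c.natDegree = 2 := by rw [hmo.natDegree_map]; exact h2
    rw [h, natDegree_one] at this
    exact (by norm_num : (0 : ℕ) ≠ 2) this
  have hnd2 : c.natDegree = 2 := by rw [hmo.natDegree_map]; exact h2
  have hdegR : (P %ₘ c).natDegree ≤ 1 := by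
    have := natDegree_modByMonic_lt P hcmo hne1
    omega
  have hRform := eq_X_add_C_of_natDegree_le_one hdegR
  set u := (P %ₘ c).coeff 1
  set v := (P %ₘ c).coeff 0
  have heval : ∀ g : Q, g ≠ 0 → u * (g * q * g⁻¹) + v = 0 := by
    intro g hg
    have := hmod g hg
    rw [hRform] at this
    simpa [eval_add, eval_C, eval_C_mul, eval_X] using this
  have h1 : u * q + v = 0 := by
    have := heval 1 one_ne_zero
    simpa using this
  obtain ⟨w, hw0, hwq⟩ := exists_noncomm hcent hq.1
  have h2w : u * (w * q * w⁻¹) + v = 0 := heval w hw0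
  have hu : u = 0 := by
    have hsub : u * (q - (w * q * w⁻¹)) = 0 := by
      rw [mul_sub]
      have : u * q - u * (w * q * w⁻¹) = (u * q + v) - (u * (w * q * w⁻¹) + v) := by
        noncomm_ring
      rw [this, h1, h2w, sub_zero]
    rcases mul_eq_zero.1 hsub with h | h
    · exact h
    · exact absurd (sub_eq_zero.1 h).symm hwq
  have hv : v = 0 := by
    rw [hu, zero_mul, zero_add] at h1
    exact h1
  have hR0 : P %ₘ c = 0 := by
    rw [hRform, hu, hv]
    simp
  exact (modByMonic_eq_zero_iff_dvd hcmo).1 hR0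

lemma coprime_mul_dvd {f g : F[X]} {P : Q[X]} (h : IsCoprime f g)
    (hf : f.map (algebraMap F Q) ∣ P) (hg : g.map (algebraMap F Q) ∣ P) :
    (f * g).map (algebraMap F Q) ∣ P := by
  obtain ⟨u, v, huv⟩ := h
  obtain ⟨S, hS⟩ := hf
  obtain ⟨T, hT⟩ := hg
  have hone : (u.map (algebraMap F Q)) * (f.map (algebraMap F Q))
      + (v.map (algebraMap F Q)) * (g.map (algebraMap F Q)) = 1 := by
    rw [← Polynomial.map_mul, ← Polynomial.map_mul, ← Polynomial.map_add, huv, Polynomial.map_one]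
  have hS' : S = g.map (algebraMap F Q) * (u.map (algebraMap F Q) * T
      + v.map (algebraMap F Q) * S) := by
    have h1 : (u.map (algebraMap F Q) * f.map (algebraMap F Q)
        + v.map (algebraMap F Q) * g.map (algebraMap F Q)) * S = S := by rw [hone, one_mul]
    calc S = u.map (algebraMap F Q) * (f.map (algebraMap F Q) * S)
          + v.map (algebraMap F Q) * (g.map (algebraMap F Q) * S) := by
            rw [← mul_assoc, ← mul_assoc, ← add_mul, h1]
    _ = u.map (algebraMap F Q) * (g.map (algebraMap F Q) * T)
          + v.map (algebraMap F Q) * (g.map (algebraMap F Q) * S) := by rw [← hS, ← hT]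
    _ = g.map (algebraMap F Q) * (u.map (algebraMap F Q) * T)
          + g.map (algebraMap F Q) * (v.map (algebraMap F Q) * S) := by
            rw [← mul_assoc, ← mul_assoc, map_alg_comm u (g.map (algebraMap F Q)),
              map_alg_comm v (g.map (algebraMap F Q)), mul_assoc, mul_assoc]
    _ = g.map (algebraMap F Q) * (u.map (algebraMap F Q) * T
          + v.map (algebraMap F Q) * S) := by rw [mul_add]
  refine ⟨u.map (algebraMap F Q) * T + v.map (algebraMap F Q) * S, ?_⟩
  rw [Polynomial.map_mul, mul_assoc, ← hS', hS]

lemma minpoly_natDegree_two [FiniteDimensional F Q]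
    (hdim : Module.finrank F Q = 4)
    (hcent : ∀ z : Q, (∀ w : Q, z * w = w * z) → ∃ r : F, z = algebraMap F Q r)
    {q : Q} (hq : ¬∃ r : F, q = algebraMap F Q r) :
    (minpoly F q).natDegree = 2 := by
  have hint : IsIntegral F q := Algebra.IsIntegral.isIntegral q
  have hmo := minpoly.monic hint
  set d := (minpoly F q).natDegree with hd
  have hli : LinearIndependent F fun i : Fin d => q ^ (i : ℕ) := linearIndependent_pow q
  have hd4 : d ≤ 4 := by
    have h := hli.fintype_card_le_finrank
    simpa [hdim] using h
  have hd1 : 0 < d := minpoly.natDegree_pos hint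
  have hne1 : d ≠ 1 := by
    intro h1
    apply hq
    refine ⟨-((minpoly F q).coeff 0), ?_⟩
    have h0 := minpoly.aeval F q
    rw [hmo.eq_X_add_C h1] at h0
    simp only [map_add, aeval_X, aeval_C] at h0
    rw [map_neg, eq_comm, neg_eq_iff_add_eq_zero, add_comm]
    exact h0
  have hne4 : d ≠ 4 := by
    intro h4
    rw [h4] at hli
    set W := Submodule.span F (Set.range fun i : Fin 4 => q ^ (i : ℕ)) with hWdef
    have hfr : Module.finrank F W = 4 := by
      rw [finrank_span_eq_card hli]
      simp
    have hW : W = ⊤ := Submodule.eq_top_of_finrank_eq (by rw [hfr, hdim])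
    have hcomm : ∀ w : Q, q * w = w * q := by
      intro w
      have hw : w ∈ W := hW ▸ Submodule.mem_top
      induction hw using Submodule.span_induction with
      | mem y hy =>
          obtain ⟨i, rfl⟩ := hy
          exact ((Commute.refl q).pow_right (i : ℕ)).eq
      | zero => simp
      | add y z _ _ hy hz => rw [mul_add, add_mul, hy, hz]
      | smul a y _ hy => rw [mul_smul_comm, smul_mul_assoc, hy]
    exact hq (hcent q hcomm)
  have hne3 : d ≠ 3 := by
    intro h3
    rw [h3] at hli
    set W := Submodule.span F (Set.range fun i : Fin 3 => q ^ (i : ℕ)) with hWdef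
    have hmem : ∀ i : ℕ, i < 3 → q ^ i ∈ W := by
      intro i hi
      exact Submodule.subset_span ⟨⟨i, hi⟩, rfl⟩
    have hrank : Module.finrank F W = 3 := by
      rw [finrank_span_eq_card hli]
      simp
    have hq3 : q ^ 3 ∈ W := by
      have h0 := minpoly.aeval F q
      rw [aeval_eq_sum_range, ← hd, h3] at h0
      rw [Finset.sum_range_succ] at h0
      have hc3 : (minpoly F q).coeff 3 = 1 := by
        have := hmo.leadingCoeff
        rwa [leadingCoeff, ← hd, h3] at this
      rw [hc3, one_smul] at h0
      have : q ^ 3 = -(∑ i ∈ Finset.range 3, (minpoly F q).coeff i • q ^ i) := by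
        rw [← neg_eq_iff_add_eq_zero] at h0
        · exact h0.symm
      rw [this]
      refine W.neg_mem (Submodule.sum_mem W fun i hi => ?_)
      exact W.smul_mem _ (hmem i (Finset.mem_range.1 hi))
    have hstep : ∀ w ∈ W, w * q ∈ W := by
      intro w hw
      induction hw using Submodule.span_induction with
      | mem y hy =>
          obtain ⟨i, rfl⟩ := hy
          rw [← pow_succ]
          rcases Nat.lt_or_ge ((i : ℕ) + 1) 3 with h | h
          · exact hmem _ h
          · have : (i : ℕ) + 1 = 3 := by omega
            rw [this]; exact hq3
      | zero => simp
      | add y z _ _ hy hz => rw [add_mul]; exact W.add_mem hy hz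
      | smul a y _ hy => rw [smul_mul_assoc]; exact W.smul_mem a hy
    have hWne : W ≠ ⊤ := by
      intro h
      rw [h, finrank_top, hdim] at hrank
      norm_num at hrank
    obtain ⟨x, hx⟩ : ∃ x : Q, x ∉ W := by
      by_contra h
      push_neg at h
      exact hWne (eq_top_iff.2 fun y _ => h y)
    have hπx : W.mkQ x ≠ 0 := by
      rw [Submodule.mkQ_apply, ne_eq, Submodule.Quotient.mk_eq_zero]
      exact hx
    have hfq : Module.finrank F (Q ⧸ W) = 1 := by
      have h := Submodule.finrank_quotient_add_finrank W
      rw [hrank, hdim] at h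
      omega
    have hle : W ≤ W.comap (LinearMap.mulRight F q) := by
      intro w hw
      exact hstep w hw
    set ρ := W.mapQ W (LinearMap.mulRight F q) hle with hρ
    have hρapp : ∀ y : Q, ρ (W.mkQ y) = W.mkQ (y * q) := by
      intro y
      rw [hρ, Submodule.mkQ_apply, Submodule.mapQ_apply]
      rfl
    have hspan : Submodule.span F {W.mkQ x} = ⊤ := by
      have h1 : Module.finrank F (Submodule.span F {W.mkQ x}) = 1 := finrank_span_singleton hπx
      exact Submodule.eq_top_of_finrank_eq (by rw [h1, hfq])
    obtain ⟨c, hc⟩ : ∃ c : F, W.mkQ (x * q) = c • W.mkQ x := by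
      have hmem' : W.mkQ (x * q) ∈ Submodule.span F {W.mkQ x} := by rw [hspan]; trivial
      obtain ⟨c, hc⟩ := Submodule.mem_span_singleton.1 hmem'
      exact ⟨c, hc.symm⟩
    have key : ∀ n : ℕ, W.mkQ (x * q ^ n) = c ^ n • W.mkQ x := by
      intro n
      induction n with
      | zero => simp
      | succ n ih =>
          rw [pow_succ, ← mul_assoc, ← hρapp, ih, map_smul, hρapp, hc, smul_smul, pow_succ]
    have hzero : (∑ i ∈ Finset.range (d + 1), ((minpoly F q).coeff i * c ^ i)) • W.mkQ x = 0 := by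
      have h0 := minpoly.aeval F q
      rw [aeval_eq_sum_range, ← hd] at h0
      have hsum : W.mkQ (x * ∑ i ∈ Finset.range (d + 1), (minpoly F q).coeff i • q ^ i) = 0 := by
        rw [h0, mul_zero, map_zero]
      rw [Finset.mul_sum] at hsum
      simp only [mul_smul_comm, map_sum, map_smul] at hsum
      have : ∀ i ∈ Finset.range (d + 1),
          (minpoly F q).coeff i • W.mkQ (x * q ^ i)
            = ((minpoly F q).coeff i * c ^ i) • W.mkQ x := by
        intro i _
        rw [key i, smul_smul]
      rw [Finset.sum_congr rfl this, ← Finset.sum_smul] at hsum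
      exact hsum
    have hroot : (minpoly F q).eval c = 0 := by
      have h := (smul_eq_zero.1 hzero).resolve_right hπx
      rw [eval_eq_sum_range, ← hd]
      exact h
    have hdvd : X - C c ∣ minpoly F q := dvd_iff_isRoot.2 hroot
    obtain ⟨s, hs⟩ := hdvd
    have hirr := minpoly.irreducible hint
    rcases hirr.isUnit_or_isUnit hs with h | h
    · exact Polynomial.not_isUnit_X_sub_C c h
    · have hs0 : s ≠ 0 := h.ne_zero
      have hX0 : X - C c ≠ 0 := X_sub_C_ne_zero c
      have hnd : d = 1 := by
        rw [hd, hs, natDegree_mul hX0 hs0, natDegree_X_sub_C, natDegree_eq_zero_of_isUnit h]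
      omega
  omega

end Aux

/-- A monic polynomial of degree `n` over a quaternion division algebra has at most `n/2`
distinct conjugacy classes of spherical roots: any family of pairwise non-conjugate
spherical roots `a : Fin m → Q` satisfies `2 * m ≤ n`. -/
theorem stmt14 {F Q : Type*} [Field F] [DivisionRing Q] [Algebra F Q]
    [FiniteDimensional F Q] (hdim : Module.finrank F Q = 4)
    (hcent : ∀ z : Q, (∀ w : Q, z * w = w * z) → ∃ r : F, z = algebraMap F Q r)
    (P : Q[X]) (hmonic : P.Monic) (m : ℕ) (a : Fin m → Q)
    (hsph : ∀ i, IsSphericalRoot F P (a i))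
    (hpair : ∀ i j, i ≠ j → ¬∃ q : Q, q ≠ 0 ∧ a j = q * a i * q⁻¹) :
    2 * m ≤ P.natDegree := by
  classical
  have hint : ∀ i, IsIntegral F (a i) := fun i => Algebra.IsIntegral.isIntegral (a i)
  have hmo : ∀ i, (minpoly F (a i)).Monic := fun i => minpoly.monic (hint i)
  have hdeg : ∀ i, (minpoly F (a i)).natDegree = 2 :=
    fun i => minpoly_natDegree_two hdim hcent (hsph i).1
  have hroot : ∀ i, ((minpoly F (a i)).map (algebraMap F Q)).eval (a i) = 0 := by
    intro i
    rw [eval_map, ← aeval_def, minpoly.aeval]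
  have hdvd : ∀ i, (minpoly F (a i)).map (algebraMap F Q) ∣ P := fun i =>
    spherical_dvd hcent (hsph i) (hmo i) (hdeg i) (hroot i)
  have hcop : ∀ i j, i ≠ j → IsCoprime (minpoly F (a i)) (minpoly F (a j)) := by
    intro i j hij
    rcases (minpoly.irreducible (hint i)).isCoprime_or_dvd (minpoly F (a j)) with h | h
    · exact h
    · exfalso
      have heq : minpoly F (a i) = minpoly F (a j) :=
        eq_of_monic_of_associated (hmo i) (hmo j)
          ((minpoly.irreducible (hint i)).associated_of_dvd (minpoly.irreducible (hint j)) h)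
      have hrootj : ((minpoly F (a i)).map (algebraMap F Q)).eval (a j) = 0 := by
        rw [heq]; exact hroot j
      exact hpair i j hij (conj_of_root hcent (hsph i).1 (hmo i) (hdeg i) (hroot i) hrootj)
  have hprod : ∀ s : Finset (Fin m), (∏ i ∈ s, minpoly F (a i)).map (algebraMap F Q) ∣ P := by
    intro s
    induction s using Finset.induction_on with
    | empty => simp
    | insert _ _ hj ih =>
        rename_i j s
        rw [Finset.prod_insert hj]
        refine coprime_mul_dvd (IsCoprime.prod_right fun i hi => hcop j i ?_) (hdvd j) ih
        rintro rfl
        exact hj hi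
  have hP0 : P ≠ 0 := hmonic.ne_zero
  have h1 := natDegree_le_of_dvd (hprod Finset.univ) hP0
  have hprodmo : (∏ i, minpoly F (a i)).Monic :=
    monic_prod_of_monic _ _ fun i _ => hmo i
  have h2 : ((∏ i, minpoly F (a i)).map (algebraMap F Q)).natDegree = 2 * m := by
    rw [hprodmo.natDegree_map, natDegree_prod _ _ fun i _ => (hmo i).ne_zero]
    simp [hdeg, Finset.sum_const, mul_comm]
  omega
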